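/- Let E be the real symmetric matrix with rows ((3,−1,−1),(−1,2,0),(−1,0,2)) (a matrix in the interior of the cone σ_{K₄−1} spanned by the quadratic forms x₁², x₂², x₃², (x₁−x₂)², (x₁−x₃)²). Fix a complex symmetric 3×3 matrix R and set τ(y) := iyE + R; then τ(y) ∈ ℍ₃ for all sufficiently large y > 0. Then the limit lim_{y→∞} e^{20πy} · θ_null(τ(y)) exists, and it equals zero if and only if e^{2πiR₂₃} = 1. -/

import Mathlib

open Complex Matrix

/-- The genus-`g` theta function with characteristic `[ε; δ]`. -/
noncomputable def theta (g : ℕ) (ε δ : Fin g → ℤ) (τ : Matrix (Fin g) (Fin g) ℂ)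
    (z : Fin g → ℂ) : ℂ :=
  ∑' N : Fin g → ℤ,
    Complex.exp (↑Real.pi * I *
        (∑ j, ∑ k, ((N j : ℂ) + (ε j : ℂ) / 2) * τ j k * ((N k : ℂ) + (ε k : ℂ) / 2)) +
      2 * ↑Real.pi * I *
        (∑ j, ((N j : ℂ) + (ε j : ℂ) / 2) * (z j + (δ j : ℂ) / 2)))

/-- Membership in the Siegel upper half-space. -/
def SiegelUpper (g : ℕ) (τ : Matrix (Fin g) (Fin g) ℂ) : Prop :=
  τ.IsSymm ∧ (Matrix.of fun j k => (τ j k).im : Matrix (Fin g) (Fin g) ℝ).PosDef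

/-- The genus-3 theta-null: the product of all theta constants with even characteristic. -/
noncomputable def thetaNull3 (τ : Matrix (Fin 3) (Fin 3) ℂ) : ℂ :=
  ∏ c ∈ Finset.univ.filter
      (fun c : (Fin 3 → Fin 2) × (Fin 3 → Fin 2) =>
        (∑ j, (c.1 j).val * (c.2 j).val) % 2 = 0),
    theta 3 (fun j => ((c.1 j).val : ℤ)) (fun j => ((c.2 j).val : ℤ)) τ 0

/-- The matrix generating the interior of the cone `σ_{K₄−1}`. -/
noncomputable def EK41 : Matrix (Fin 3) (Fin 3) ℂ := !![3, -1, -1; -1, 2, 0; -1, 0, 2]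

namespace Stmt11
def q4 (n : Fin 3 → ℤ) : ℤ :=
  n 0 ^ 2 + n 1 ^ 2 + n 2 ^ 2 + (n 0 - n 1) ^ 2 + (n 0 - n 2) ^ 2
def mu4 (ε : Fin 3 → ℤ) : ℤ :=
  ε 0 + ε 1 + ε 2 + (ε 0 - ε 1) ^ 2 + (ε 0 - ε 2) ^ 2
def Sfun (ε : Fin 3 → ℤ) : Finset (Fin 3 → ℤ) :=
  if ε 0 = 1 then
    (if ε 1 = 1 then
      (if ε 2 = 1 then {![0,0,0], ![-1,-1,-1]} else {![0,0,0], ![-1,-1,0]})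
    else
      (if ε 2 = 1 then {![0,0,0], ![-1,0,-1]} else {![0,0,0], ![-1,0,0]}))
  else
    (if ε 1 = 1 then
      (if ε 2 = 1 then {![0,0,0], ![0,-1,0], ![0,0,-1], ![0,-1,-1]}
       else {![0,0,0], ![0,-1,0]})
    else
      (if ε 2 = 1 then {![0,0,0], ![0,0,-1]} else ({![0,0,0]} : Finset (Fin 3 → ℤ))))

lemma vec_eq_iff (a b c d e f : ℤ) :
    (![a, b, c] : Fin 3 → ℤ) = ![d, e, f] ↔ a = d ∧ b = e ∧ c = f := by
  constructor
  · intro h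
    exact ⟨congrFun h 0, congrFun h 1, congrFun h 2⟩
  · rintro ⟨rfl, rfl, rfl⟩; rfl

lemma odd_sq (x : ℤ) : 1 ≤ (2 * x + 1) ^ 2 := by
  rcases le_or_gt 0 x with h | h
  · nlinarith
  · nlinarith

def nn (ε N : Fin 3 → ℤ) (j : Fin 3) : ℤ := 2 * N j + ε j

lemma bnd0 (x : ℤ) (h : (2 * x) ^ 2 ≤ 4) : -1 ≤ x ∧ x ≤ 1 := by
  constructor <;> nlinarith
lemma bnd1 (x : ℤ) (h : (2 * x + 1) ^ 2 ≤ 4) : -1 ≤ x ∧ x ≤ 0 := by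
  constructor <;> nlinarith

set_option maxHeartbeats 1000000 in
lemma q4_min (ε : Fin 3 → ℤ) (hε : ∀ j, ε j = 0 ∨ ε j = 1) (N : Fin 3 → ℤ) :
    mu4 ε ≤ q4 (nn ε N) ∧ (q4 (nn ε N) = mu4 ε ↔ N ∈ Sfun ε) := by
  obtain ⟨a, b, c, rfl⟩ : ∃ a b c, N = ![a, b, c] :=
    ⟨N 0, N 1, N 2, by funext j; fin_cases j <;> rfl⟩
  rcases hε 0 with h0 | h0 <;> rcases hε 1 with h1 | h1 <;> rcases hε 2 with h2 | h2 <;>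
    simp only [q4, mu4, nn, Sfun, h0, h1, h2, Matrix.cons_val_zero, Matrix.cons_val_one,
      Matrix.head_cons, Matrix.cons_val_two, Matrix.tail_cons, Finset.mem_insert,
      Finset.mem_singleton] <;>
    norm_num
  · constructor
    · nlinarith [sq_nonneg a, sq_nonneg b, sq_nonneg c, sq_nonneg (a-b), sq_nonneg (a-c)]
    · constructor
      · intro h
        obtain ⟨ha1, ha2⟩ := bnd0 a (by nlinarith [sq_nonneg b, sq_nonneg c, sq_nonneg (a-b), sq_nonneg (a-c)])
        obtain ⟨hb1, hb2⟩ := bnd0 b (by nlinarith [sq_nonneg a, sq_nonneg c, sq_nonneg (a-b), sq_nonneg (a-c)])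
        obtain ⟨hc1, hc2⟩ := bnd0 c (by nlinarith [sq_nonneg a, sq_nonneg b, sq_nonneg (a-b), sq_nonneg (a-c)])
        interval_cases a <;> interval_cases b <;> interval_cases c <;> revert h <;> decide
      · rintro ⟨rfl, rfl, rfl⟩ <;> decide
  · constructor
    · nlinarith [sq_nonneg a, sq_nonneg b, odd_sq c, sq_nonneg (a-b), odd_sq (a-c-1)]
    · constructor
      · intro h
        obtain ⟨ha1, ha2⟩ := bnd0 a (by nlinarith [sq_nonneg b, odd_sq c, sq_nonneg (a-b), odd_sq (a-c-1)])
        obtain ⟨hb1, hb2⟩ := bnd0 b (by nlinarith [sq_nonneg a, odd_sq c, sq_nonneg (a-b), odd_sq (a-c-1)])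
        obtain ⟨hc1, hc2⟩ := bnd1 c (by nlinarith [sq_nonneg a, sq_nonneg b, sq_nonneg (a-b), odd_sq (a-c-1)])
        interval_cases a <;> interval_cases b <;> interval_cases c <;> revert h <;> decide
      · rintro (⟨rfl, rfl, rfl⟩ | ⟨rfl, rfl, rfl⟩) <;> decide
  · constructor
    · nlinarith [sq_nonneg a, odd_sq b, sq_nonneg c, odd_sq (a-b-1), sq_nonneg (a-c)]
    · constructor
      · intro h
        obtain ⟨ha1, ha2⟩ := bnd0 a (by nlinarith [odd_sq b, sq_nonneg c, odd_sq (a-b-1), sq_nonneg (a-c)])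
        obtain ⟨hb1, hb2⟩ := bnd1 b (by nlinarith [sq_nonneg a, sq_nonneg c, odd_sq (a-b-1), sq_nonneg (a-c)])
        obtain ⟨hc1, hc2⟩ := bnd0 c (by nlinarith [sq_nonneg a, odd_sq b, odd_sq (a-b-1), sq_nonneg (a-c)])
        interval_cases a <;> interval_cases b <;> interval_cases c <;> revert h <;> decide
      · rintro (⟨rfl, rfl, rfl⟩ | ⟨rfl, rfl, rfl⟩) <;> decide
  · constructor
    · nlinarith [sq_nonneg a, odd_sq b, odd_sq c, odd_sq (a-b-1), odd_sq (a-c-1)]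
    · constructor
      · intro h
        obtain ⟨ha1, ha2⟩ := bnd0 a (by nlinarith [odd_sq b, odd_sq c, odd_sq (a-b-1), odd_sq (a-c-1)])
        obtain ⟨hb1, hb2⟩ := bnd1 b (by nlinarith [sq_nonneg a, odd_sq c, odd_sq (a-b-1), odd_sq (a-c-1)])
        obtain ⟨hc1, hc2⟩ := bnd1 c (by nlinarith [sq_nonneg a, odd_sq b, odd_sq (a-b-1), odd_sq (a-c-1)])
        interval_cases a <;> interval_cases b <;> interval_cases c <;> revert h <;> decide
      · rintro (⟨rfl, rfl, rfl⟩ | ⟨rfl, rfl, rfl⟩ | ⟨rfl, rfl, rfl⟩ | ⟨rfl, rfl, rfl⟩) <;> decide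
  · constructor
    · nlinarith [odd_sq a, sq_nonneg b, sq_nonneg c, odd_sq (a-b), odd_sq (a-c)]
    · constructor
      · intro h
        obtain ⟨ha1, ha2⟩ := bnd1 a (by nlinarith [sq_nonneg b, sq_nonneg c, odd_sq (a-b), odd_sq (a-c)])
        obtain ⟨hb1, hb2⟩ := bnd0 b (by nlinarith [odd_sq a, sq_nonneg c, odd_sq (a-b), odd_sq (a-c)])
        obtain ⟨hc1, hc2⟩ := bnd0 c (by nlinarith [odd_sq a, sq_nonneg b, odd_sq (a-b), odd_sq (a-c)])
        interval_cases a <;> interval_cases b <;> interval_cases c <;> revert h <;> decide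
      · rintro (⟨rfl, rfl, rfl⟩ | ⟨rfl, rfl, rfl⟩) <;> decide
  · constructor
    · nlinarith [odd_sq a, sq_nonneg b, odd_sq c, odd_sq (a-b), sq_nonneg (a-c)]
    · constructor
      · intro h
        obtain ⟨ha1, ha2⟩ := bnd1 a (by nlinarith [sq_nonneg b, odd_sq c, odd_sq (a-b), sq_nonneg (a-c)])
        obtain ⟨hb1, hb2⟩ := bnd0 b (by nlinarith [odd_sq a, odd_sq c, odd_sq (a-b), sq_nonneg (a-c)])
        obtain ⟨hc1, hc2⟩ := bnd1 c (by nlinarith [odd_sq a, sq_nonneg b, odd_sq (a-b), sq_nonneg (a-c)])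
        interval_cases a <;> interval_cases b <;> interval_cases c <;> revert h <;> decide
      · rintro (⟨rfl, rfl, rfl⟩ | ⟨rfl, rfl, rfl⟩) <;> decide
  · constructor
    · nlinarith [odd_sq a, odd_sq b, sq_nonneg c, sq_nonneg (a-b), odd_sq (a-c)]
    · constructor
      · intro h
        obtain ⟨ha1, ha2⟩ := bnd1 a (by nlinarith [odd_sq b, sq_nonneg c, sq_nonneg (a-b), odd_sq (a-c)])
        obtain ⟨hb1, hb2⟩ := bnd1 b (by nlinarith [odd_sq a, sq_nonneg c, sq_nonneg (a-b), odd_sq (a-c)])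
        obtain ⟨hc1, hc2⟩ := bnd0 c (by nlinarith [odd_sq a, odd_sq b, sq_nonneg (a-b), odd_sq (a-c)])
        interval_cases a <;> interval_cases b <;> interval_cases c <;> revert h <;> decide
      · rintro (⟨rfl, rfl, rfl⟩ | ⟨rfl, rfl, rfl⟩) <;> decide
  · constructor
    · nlinarith [odd_sq a, odd_sq b, odd_sq c, sq_nonneg (a-b), sq_nonneg (a-c)]
    · constructor
      · intro h
        obtain ⟨ha1, ha2⟩ := bnd1 a (by nlinarith [odd_sq b, odd_sq c, sq_nonneg (a-b), sq_nonneg (a-c)])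
        obtain ⟨hb1, hb2⟩ := bnd1 b (by nlinarith [odd_sq a, odd_sq c, sq_nonneg (a-b), sq_nonneg (a-c)])
        obtain ⟨hc1, hc2⟩ := bnd1 c (by nlinarith [odd_sq a, odd_sq b, sq_nonneg (a-b), sq_nonneg (a-c)])
        interval_cases a <;> interval_cases b <;> interval_cases c <;> revert h <;> decide
      · rintro (⟨rfl, rfl, rfl⟩ | ⟨rfl, rfl, rfl⟩) <;> decide

/-! ## Analytic part -/

noncomputable def mr (ε N : Fin 3 → ℤ) (j : Fin 3) : ℝ := (N j : ℝ) + (ε j : ℝ) / 2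

noncomputable def tN (ε N : Fin 3 → ℤ) : ℝ := ∑ j, (mr ε N j) ^ 2

noncomputable def CR (R : Matrix (Fin 3) (Fin 3) ℂ) : ℝ := ∑ j, ∑ k, |(R j k).im|

noncomputable def wterm (R : Matrix (Fin 3) (Fin 3) ℂ) (ε δ N : Fin 3 → ℤ) : ℂ :=
  ↑Real.pi * I * (∑ j, ∑ k, ((mr ε N j : ℝ) : ℂ) * R j k * ((mr ε N k : ℝ) : ℂ)) +
    ↑Real.pi * I * ((↑(∑ j, mr ε N j * (δ j : ℝ)) : ℂ))

def e3 : (Fin 3 → ℤ) ≃ ℤ × ℤ × ℤ where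
  toFun N := (N 0, N 1, N 2)
  invFun p := ![p.1, p.2.1, p.2.2]
  left_inv N := by funext j; fin_cases j <;> rfl
  right_inv p := rfl

lemma summable_exp_abs : Summable (fun n : ℤ => Real.exp (-(Real.pi * |(n : ℝ)|))) := by
  have key : ∀ n : ℕ, Real.exp (-(Real.pi * (n : ℝ))) = (Real.exp (-Real.pi)) ^ n := by
    intro n
    rw [← Real.exp_nat_mul]
    ring_nf
  apply Summable.of_nat_of_neg
  · apply Summable.congr (summable_geometric_of_lt_one (Real.exp_nonneg _)
      (Real.exp_lt_one_iff.mpr (neg_neg_iff_pos.mpr Real.pi_pos)))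
    intro n
    rw [← key]
    norm_num
  · apply Summable.congr (summable_geometric_of_lt_one (Real.exp_nonneg _)
      (Real.exp_lt_one_iff.mpr (neg_neg_iff_pos.mpr Real.pi_pos)))
    intro n
    rw [← key]
    norm_num

set_option maxHeartbeats 2000000 in
lemma summable_bound3 :
    Summable (fun N : Fin 3 → ℤ => Real.exp (-(Real.pi * |(N 0 : ℝ)|)) *
      (Real.exp (-(Real.pi * |(N 1 : ℝ)|)) * Real.exp (-(Real.pi * |(N 2 : ℝ)|)))) := by
  have h1 := summable_exp_abs
  have hnn : (0 : ℤ → ℝ) ≤ fun n : ℤ => Real.exp (-(Real.pi * |(n : ℝ)|)) :=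
    fun n => Real.exp_nonneg _
  have h2 : Summable (fun p : ℤ × ℤ =>
      Real.exp (-(Real.pi * |(p.1 : ℝ)|)) * Real.exp (-(Real.pi * |(p.2 : ℝ)|))) :=
    h1.mul_of_nonneg h1 hnn hnn
  have hnn2 : (0 : ℤ × ℤ → ℝ) ≤ fun p : ℤ × ℤ =>
      Real.exp (-(Real.pi * |(p.1 : ℝ)|)) * Real.exp (-(Real.pi * |(p.2 : ℝ)|)) :=
    fun p => mul_nonneg (Real.exp_nonneg _) (Real.exp_nonneg _)
  have h3 : Summable (fun p : ℤ × (ℤ × ℤ) => Real.exp (-(Real.pi * |(p.1 : ℝ)|)) *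
      (Real.exp (-(Real.pi * |(p.2.1 : ℝ)|)) * Real.exp (-(Real.pi * |(p.2.2 : ℝ)|)))) :=
    h1.mul_of_nonneg h2 hnn hnn2
  exact (h3.comp_injective e3.injective).congr (fun N => rfl)

lemma mrC (ε N : Fin 3 → ℤ) (j : Fin 3) : ((mr ε N j : ℝ) : ℂ) = (N j : ℂ) + (ε j : ℂ) / 2 := by
  simp [mr]

set_option maxHeartbeats 1000000 in
lemma summand_eq (R : Matrix (Fin 3) (Fin 3) ℂ) (y : ℝ) (ε δ N : Fin 3 → ℤ) :
    ↑Real.pi * I *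
        (∑ j, ∑ k, ((N j : ℂ) + (ε j : ℂ) / 2) * ((I * (y : ℂ)) • EK41 + R) j k *
          ((N k : ℂ) + (ε k : ℂ) / 2)) +
      2 * ↑Real.pi * I *
        (∑ j, ((N j : ℂ) + (ε j : ℂ) / 2) * ((0 : Fin 3 → ℂ) j + (δ j : ℂ) / 2))
    = ↑(-(Real.pi * ((q4 (nn ε N) : ℝ) / 4) * y)) + wterm R ε δ N := by
  simp only [Fin.sum_univ_three, Matrix.add_apply, Matrix.smul_apply, smul_eq_mul,
    Pi.zero_apply, EK41, Matrix.cons_val', Matrix.cons_val_zero, Matrix.cons_val_one,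
    Matrix.head_cons, Matrix.empty_val', Matrix.cons_val_fin_one, Matrix.head_fin_const,
    Matrix.cons_val_two, Matrix.tail_cons, Matrix.of_apply, wterm, mrC, q4, nn, mr]
  push_cast
  linear_combination (↑Real.pi * (y : ℂ) *
     (((2 * (N 0 : ℂ) + (ε 0 : ℂ)) ^ 2 + (2 * (N 1 : ℂ) + (ε 1 : ℂ)) ^ 2 +
       (2 * (N 2 : ℂ) + (ε 2 : ℂ)) ^ 2 +
       ((2 * (N 0 : ℂ) + (ε 0 : ℂ)) - (2 * (N 1 : ℂ) + (ε 1 : ℂ))) ^ 2 +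
       ((2 * (N 0 : ℂ) + (ε 0 : ℂ)) - (2 * (N 2 : ℂ) + (ε 2 : ℂ))) ^ 2) / 4)) * Complex.I_sq


lemma mu4_nonneg (ε : Fin 3 → ℤ) (hε : ∀ j, ε j = 0 ∨ ε j = 1) : (0 : ℤ) ≤ mu4 ε := by
  rcases hε 0 with h0 | h0 <;> rcases hε 1 with h1 | h1 <;> rcases hε 2 with h2 | h2 <;>
    simp [mu4, h0, h1, h2] <;> norm_num

lemma tN_nonneg (ε N : Fin 3 → ℤ) : 0 ≤ tN ε N :=
  Finset.sum_nonneg fun _ _ => sq_nonneg _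

lemma CR_nonneg (R : Matrix (Fin 3) (Fin 3) ℂ) : 0 ≤ CR R :=
  Finset.sum_nonneg fun _ _ => Finset.sum_nonneg fun _ _ => abs_nonneg _

lemma tN_le (ε N : Fin 3 → ℤ) : tN ε N ≤ (q4 (nn ε N) : ℝ) / 4 := by
  simp only [tN, Fin.sum_univ_three, q4, nn, mr]
  push_cast
  nlinarith [sq_nonneg ((N 0 : ℝ) + (ε 0 : ℝ) / 2 - ((N 1 : ℝ) + (ε 1 : ℝ) / 2)),
    sq_nonneg ((N 0 : ℝ) + (ε 0 : ℝ) / 2 - ((N 2 : ℝ) + (ε 2 : ℝ) / 2))]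

lemma abs_le_tN (ε N : Fin 3 → ℤ) (hε : ∀ j, ε j = 0 ∨ ε j = 1) :
    |(N 0 : ℝ)| + |(N 1 : ℝ)| + |(N 2 : ℝ)| - 3 ≤ tN ε N := by
  have key : ∀ j, |(N j : ℝ)| - 1 ≤ (mr ε N j) ^ 2 := by
    intro j
    rcases hε j with h | h <;> rw [mr, h] <;> push_cast <;>
      rcases abs_cases ((N j : ℝ)) with ⟨h1, h2⟩ | ⟨h1, h2⟩ <;>
      nlinarith [sq_nonneg ((N j : ℝ) + 1), sq_nonneg ((N j : ℝ) - 1), sq_nonneg ((N j : ℝ))]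
  have k0 := key 0
  have k1 := key 1
  have k2 := key 2
  simp only [tN, Fin.sum_univ_three]
  linarith

lemma wterm_re_le (R : Matrix (Fin 3) (Fin 3) ℂ) (ε δ N : Fin 3 → ℤ) :
    (wterm R ε δ N).re ≤ Real.pi * (CR R * tN ε N) := by
  have hsq : ∀ j, (mr ε N j) ^ 2 ≤ tN ε N := fun j =>
    Finset.single_le_sum (f := fun i => (mr ε N i) ^ 2) (fun i _ => sq_nonneg _)
      (Finset.mem_univ j)
  have habs : ∀ (x y b : ℝ), x ^ 2 ≤ tN ε N → y ^ 2 ≤ tN ε N →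
      -(x * y * b) ≤ |b| * tN ε N := by
    intro x y b hx hy
    rcases abs_cases b with ⟨h1, h2⟩ | ⟨h1, h2⟩ <;>
      nlinarith [sq_nonneg (x + y), sq_nonneg (x - y)]
  have hterm : ∀ j k, (((mr ε N j : ℝ) : ℂ) * R j k * ((mr ε N k : ℝ) : ℂ)).im
      = mr ε N j * mr ε N k * (R j k).im := by
    intro j k
    simp [Complex.mul_im, Complex.ofReal_re, Complex.ofReal_im]
    ring
  have hre : (wterm R ε δ N).re =
      -(Real.pi * (∑ j, ∑ k, mr ε N j * mr ε N k * (R j k).im)) := by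
    rw [wterm]
    rw [Complex.add_re, mul_assoc, Complex.re_ofReal_mul, Complex.I_mul_re,
      mul_assoc, Complex.re_ofReal_mul, Complex.I_mul_re]
    simp only [Complex.ofReal_im, Complex.im_sum, hterm]
    ring
  rw [hre]
  have hstep : -(∑ j, ∑ k, mr ε N j * mr ε N k * (R j k).im) ≤ CR R * tN ε N := by
    rw [CR, Finset.sum_mul, ← Finset.sum_neg_distrib]
    apply Finset.sum_le_sum
    intro j _
    rw [Finset.sum_mul, ← Finset.sum_neg_distrib]
    apply Finset.sum_le_sum
    intro k _
    exact habs _ _ _ (hsq j) (hsq k)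
  nlinarith [mul_le_mul_of_nonneg_left hstep Real.pi_pos.le]


set_option maxHeartbeats 2000000 in
lemma theta_limit (R : Matrix (Fin 3) (Fin 3) ℂ) (ε δ : Fin 3 → ℤ)
    (hε : ∀ j, ε j = 0 ∨ ε j = 1) :
    Filter.Tendsto (fun y : ℝ =>
        (↑(Real.exp (Real.pi * (mu4 ε : ℝ) / 4 * y)) : ℂ) *
          theta 3 ε δ ((I * (y : ℂ)) • EK41 + R) 0)
      Filter.atTop (nhds (∑ N ∈ Sfun ε, Complex.exp (wterm R ε δ N))) := by
  classical
  set f : ℝ → (Fin 3 → ℤ) → ℂ := fun y N =>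
    Complex.exp (↑(-(Real.pi * (((q4 (nn ε N) : ℝ) - (mu4 ε : ℝ)) / 4) * y)) + wterm R ε δ N)
    with hf
  set g : (Fin 3 → ℤ) → ℂ := fun N =>
    if N ∈ Sfun ε then Complex.exp (wterm R ε δ N) else 0 with hg
  have hstep : ∀ y : ℝ,
      (↑(Real.exp (Real.pi * (mu4 ε : ℝ) / 4 * y)) : ℂ) *
          theta 3 ε δ ((I * (y : ℂ)) • EK41 + R) 0 = ∑' N, f y N := by
    intro y
    rw [theta, ← tsum_mul_left]
    congr 1
    funext N
    simp only [hf]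
    rw [summand_eq R y ε δ N, Complex.ofReal_exp, ← Complex.exp_add]
    congr 1
    push_cast
    ring
  have key : Filter.Tendsto (fun y => ∑' N, f y N) Filter.atTop (nhds (∑' N, g N)) := by
    apply tendsto_tsum_of_dominated_convergence
      (bound := fun N : Fin 3 → ℤ =>
        Real.exp (3 * Real.pi + Real.pi * (CR R + 1) * (mu4 ε : ℝ) / 4) *
        (Real.exp (-(Real.pi * |(N 0 : ℝ)|)) *
          (Real.exp (-(Real.pi * |(N 1 : ℝ)|)) * Real.exp (-(Real.pi * |(N 2 : ℝ)|)))))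
    · exact summable_bound3.mul_left _
    · intro N
      by_cases hN : N ∈ Sfun ε
      · have hq : q4 (nn ε N) = mu4 ε := ((q4_min ε hε N).2).mpr hN
        have hfy : ∀ y : ℝ, f y N = Complex.exp (wterm R ε δ N) := by
          intro y; simp [hf, hq]
        simpa only [hfy, hg, if_pos hN] using
          tendsto_const_nhds (x := Complex.exp (wterm R ε δ N))
      · simp only [hg, if_neg hN]
        have hgap : (0:ℝ) < (q4 (nn ε N) : ℝ) - (mu4 ε : ℝ) := by
          have h1 : q4 (nn ε N) ≠ mu4 ε := fun hc => hN (((q4_min ε hε N).2).mp hc)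
          have h2 := (q4_min ε hε N).1
          have h3 : mu4 ε + 1 ≤ q4 (nn ε N) := by omega
          have h4 : (mu4 ε : ℝ) + 1 ≤ (q4 (nn ε N) : ℝ) := by exact_mod_cast h3
          linarith
        rw [tendsto_zero_iff_norm_tendsto_zero]
        have hnorm : ∀ y : ℝ, ‖f y N‖ =
            Real.exp (-(Real.pi * (((q4 (nn ε N) : ℝ) - (mu4 ε : ℝ)) / 4) * y)
              + (wterm R ε δ N).re) := by
          intro y
          rw [hf, Complex.norm_exp]
          congr 1
        simp only [hnorm]
        have ha : 0 < Real.pi * (((q4 (nn ε N) : ℝ) - (mu4 ε : ℝ)) / 4) := by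
          have := Real.pi_pos; nlinarith
        have hlin : Filter.Tendsto (fun y : ℝ =>
            -(Real.pi * (((q4 (nn ε N) : ℝ) - (mu4 ε : ℝ)) / 4) * y)
              + (wterm R ε δ N).re) Filter.atTop Filter.atBot := by
          apply Filter.tendsto_atBot_add_const_right
          exact Filter.tendsto_neg_atTop_atBot.comp (Filter.Tendsto.const_mul_atTop ha Filter.tendsto_id)
        exact Real.tendsto_exp_atBot.comp hlin
    · filter_upwards [Filter.eventually_ge_atTop (CR R + 1)] with y hy
      intro N
      have hC := CR_nonneg R
      have hμ : (0:ℝ) ≤ (mu4 ε : ℝ) := by exact_mod_cast mu4_nonneg ε hε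
      have ht0 := tN_nonneg ε N
      have htq := tN_le ε N
      have hw := wterm_re_le R ε δ N
      have habs := abs_le_tN ε N hε
      have hq : (mu4 ε : ℝ) ≤ (q4 (nn ε N) : ℝ) := by
        exact_mod_cast (q4_min ε hε N).1
      have hnorm : ‖f y N‖ =
          Real.exp (-(Real.pi * (((q4 (nn ε N) : ℝ) - (mu4 ε : ℝ)) / 4) * y)
            + (wterm R ε δ N).re) := by
        rw [hf, Complex.norm_exp]
        congr 1
      rw [hnorm, ← Real.exp_add, ← Real.exp_add, ← Real.exp_add, Real.exp_le_exp]
      have s1 : Real.pi * (((q4 (nn ε N) : ℝ) - (mu4 ε : ℝ)) / 4) * (CR R + 1)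
          ≤ Real.pi * (((q4 (nn ε N) : ℝ) - (mu4 ε : ℝ)) / 4) * y := by
        apply mul_le_mul_of_nonneg_left hy
        have := Real.pi_pos
        nlinarith
      have s2 : tN ε N - (mu4 ε : ℝ) / 4 ≤ ((q4 (nn ε N) : ℝ) - (mu4 ε : ℝ)) / 4 := by
        linarith
      have s3 : Real.pi * (CR R + 1) * (tN ε N - (mu4 ε : ℝ) / 4)
          ≤ Real.pi * (CR R + 1) * (((q4 (nn ε N) : ℝ) - (mu4 ε : ℝ)) / 4) := by
        apply mul_le_mul_of_nonneg_left s2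
        have := Real.pi_pos
        nlinarith
      have s4 : Real.pi * (|(N 0 : ℝ)| + |(N 1 : ℝ)| + |(N 2 : ℝ)| - 3)
          ≤ Real.pi * tN ε N :=
        mul_le_mul_of_nonneg_left habs Real.pi_pos.le
      nlinarith [s1, s3, s4, hw]
  have h2 : ∑' N, g N = ∑ N ∈ Sfun ε, Complex.exp (wterm R ε δ N) := by
    rw [tsum_eq_sum (s := Sfun ε) (fun b hb => by simp [hg, if_neg hb])]
    exact Finset.sum_congr rfl fun N hN => by simp [hg, if_pos hN]
  have h3 : (fun y : ℝ =>
      (↑(Real.exp (Real.pi * (mu4 ε : ℝ) / 4 * y)) : ℂ) *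
        theta 3 ε δ ((I * (y : ℂ)) • EK41 + R) 0) = fun y => ∑' N, f y N :=
    funext hstep
  rw [h3, ← h2]
  exact key


lemma cross_bd (C b u v : ℝ) (hb : |b| ≤ C) : -(C * (u ^ 2 + v ^ 2) / 2) ≤ u * b * v := by
  obtain ⟨h1, h2⟩ := abs_le.mp hb
  have hC : 0 ≤ C := le_trans (abs_nonneg b) hb
  rcases le_or_gt 0 (u * v) with h | h
  · nlinarith [mul_nonneg (by linarith : (0:ℝ) ≤ C - b) h,
      mul_nonneg hC (sq_nonneg (u - v))]
  · nlinarith [mul_nonneg (by linarith : (0:ℝ) ≤ C + b) (by linarith : (0:ℝ) ≤ -(u * v)),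
      mul_nonneg hC (sq_nonneg (u + v))]

lemma Rim_le (R : Matrix (Fin 3) (Fin 3) ℂ) (j k : Fin 3) : |(R j k).im| ≤ CR R := by
  calc |(R j k).im| ≤ ∑ k', |(R j k').im| :=
        Finset.single_le_sum (f := fun k' => |(R j k').im|)
          (fun i _ => abs_nonneg _) (Finset.mem_univ k)
    _ ≤ CR R :=
        Finset.single_le_sum (f := fun j' => ∑ k', |(R j' k').im|)
          (fun i _ => Finset.sum_nonneg fun _ _ => abs_nonneg _) (Finset.mem_univ j)

set_option maxHeartbeats 2000000 in
lemma siegel_event (R : Matrix (Fin 3) (Fin 3) ℂ) (hR : R.IsSymm) :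
    ∀ᶠ y : ℝ in Filter.atTop, SiegelUpper 3 ((I * (y : ℂ)) • EK41 + R) := by
  have hC := CR_nonneg R
  have hRsym : ∀ i j : Fin 3, R j i = R i j := fun i j => by
    have := congrFun (congrFun hR i) j
    simpa [Matrix.transpose_apply] using this
  have hEsym : ∀ i j : Fin 3, EK41 j i = EK41 i j := by
    intro i j
    fin_cases i <;> fin_cases j <;> norm_num [EK41, Matrix.vecHead, Matrix.vecTail, Function.comp]
  filter_upwards [Filter.eventually_gt_atTop (3 * CR R + 1)] with y hy
  have hτsym : ∀ i j : Fin 3,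
      ((I * (y : ℂ)) • EK41 + R) j i = ((I * (y : ℂ)) • EK41 + R) i j := by
    intro i j
    simp [Matrix.add_apply, Matrix.smul_apply, hRsym i j, hEsym i j]
  constructor
  · ext i j
    simpa [Matrix.transpose_apply] using hτsym i j
  · constructor
    · ext i j
      simp only [Matrix.conjTranspose_apply, Matrix.of_apply, star_trivial]
      rw [hτsym j i]
    · intro x hx
      have hs : 0 < x 0 ^ 2 + x 1 ^ 2 + x 2 ^ 2 := by
        rcases Classical.em (x 0 = 0 ∧ x 1 = 0 ∧ x 2 = 0) with h | h
        · exact absurd (Finsupp.ext fun j => by fin_cases j <;> simp [h.1, h.2.1, h.2.2]) hx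
        · have h0 := sq_nonneg (x 0)
          have h1 := sq_nonneg (x 1)
          have h2 := sq_nonneg (x 2)
          rcases not_and_or.mp h with h' | h'
          · have : x 0 ^ 2 > 0 := by positivity
            linarith
          · rcases not_and_or.mp h' with h'' | h''
            · have : x 1 ^ 2 > 0 := by positivity
              linarith
            · have : x 2 ^ 2 > 0 := by positivity
              linarith
      have k00 := cross_bd (CR R) ((R 0 0).im) (x 0) (x 0) (Rim_le R 0 0)
      have k01 := cross_bd (CR R) ((R 0 1).im) (x 0) (x 1) (Rim_le R 0 1)
      have k02 := cross_bd (CR R) ((R 0 2).im) (x 0) (x 2) (Rim_le R 0 2)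
      have k10 := cross_bd (CR R) ((R 1 0).im) (x 1) (x 0) (Rim_le R 1 0)
      have k11 := cross_bd (CR R) ((R 1 1).im) (x 1) (x 1) (Rim_le R 1 1)
      have k12 := cross_bd (CR R) ((R 1 2).im) (x 1) (x 2) (Rim_le R 1 2)
      have k20 := cross_bd (CR R) ((R 2 0).im) (x 2) (x 0) (Rim_le R 2 0)
      have k21 := cross_bd (CR R) ((R 2 1).im) (x 2) (x 1) (Rim_le R 2 1)
      have k22 := cross_bd (CR R) ((R 2 2).im) (x 2) (x 2) (Rim_le R 2 2)
      have hy0 : (0:ℝ) < y := by linarith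
      simp only [star_trivial, Finsupp.sum_fintype, zero_mul, mul_zero, Finset.sum_const_zero,
          add_zero, implies_true, dotProduct, Matrix.mulVec, Fin.sum_univ_three,
        Matrix.of_apply, Matrix.add_apply, Matrix.smul_apply, smul_eq_mul, EK41,
        Matrix.cons_val', Matrix.cons_val_zero, Matrix.cons_val_one, Matrix.head_cons,
        Matrix.empty_val', Matrix.cons_val_fin_one, Matrix.head_fin_const,
        Matrix.cons_val_two, Matrix.tail_cons, Matrix.of_apply,
        Complex.add_im, Complex.mul_im, Complex.I_re, Complex.I_im,
        Complex.ofReal_re, Complex.ofReal_im]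
      norm_num
      nlinarith [mul_nonneg (by linarith : (0:ℝ) ≤ y - (3 * CR R + 1)) (sq_nonneg (x 0)),
        mul_nonneg (by linarith : (0:ℝ) ≤ y - (3 * CR R + 1)) (sq_nonneg (x 1)),
        mul_nonneg (by linarith : (0:ℝ) ≤ y - (3 * CR R + 1)) (sq_nonneg (x 2)),
        mul_nonneg (by linarith : (0:ℝ) ≤ y - (3 * CR R + 1)) (sq_nonneg (x 0 - x 1)),
        mul_nonneg (by linarith : (0:ℝ) ≤ y - (3 * CR R + 1)) (sq_nonneg (x 0 - x 2)),
        mul_nonneg hy0.le (sq_nonneg (x 0 - x 1)), mul_nonneg hy0.le (sq_nonneg (x 0 - x 2))]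


lemma wterm_neg (R : Matrix (Fin 3) (Fin 3) ℂ) (ε δ : Fin 3 → ℤ) :
    wterm R ε δ (fun j => -ε j) = wterm R ε δ 0 -
      ↑Real.pi * I * ((ε 0 * δ 0 + ε 1 * δ 1 + ε 2 * δ 2 : ℤ) : ℂ) := by
  simp only [wterm, mr, Fin.sum_univ_three, Pi.zero_apply]
  push_cast
  ring

lemma pair_ne (R : Matrix (Fin 3) (Fin 3) ℂ) (ε δ : Fin 3 → ℤ) (k : ℤ)
    (hk : ε 0 * δ 0 + ε 1 * δ 1 + ε 2 * δ 2 = 2 * k) :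
    Complex.exp (wterm R ε δ 0) + Complex.exp (wterm R ε δ (fun j => -ε j)) ≠ 0 := by
  rw [wterm_neg, hk]
  have h2 : (↑Real.pi * I * ((2 * k : ℤ) : ℂ)) = (k : ℂ) * (2 * ↑Real.pi * I) := by
    push_cast; ring
  rw [h2, Complex.exp_sub, Complex.exp_int_mul_two_pi_mul_I, div_one]
  intro hcon
  have h3 : (2 : ℂ) * Complex.exp (wterm R ε δ 0) = 0 := by linear_combination hcon
  rcases mul_eq_zero.mp h3 with h | h
  · norm_num at h
  · exact Complex.exp_ne_zero _ h

lemma pair_case (R : Matrix (Fin 3) (Fin 3) ℂ) (ε δ : Fin 3 → ℤ)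
    (hS : Sfun ε = {0, fun j => -ε j}) (hne : (0 : Fin 3 → ℤ) ≠ fun j => -ε j) (k : ℤ)
    (hk : ε 0 * δ 0 + ε 1 * δ 1 + ε 2 * δ 2 = 2 * k) :
    (∑ N ∈ Sfun ε, Complex.exp (wterm R ε δ N)) ≠ 0 := by
  rw [hS, Finset.sum_pair hne]
  exact pair_ne R ε δ k hk

lemma single_case (R : Matrix (Fin 3) (Fin 3) ℂ) (ε δ : Fin 3 → ℤ)
    (hS : Sfun ε = {0}) :
    (∑ N ∈ Sfun ε, Complex.exp (wterm R ε δ N)) ≠ 0 := by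
  rw [hS, Finset.sum_singleton]
  exact Complex.exp_ne_zero _

def epsZ (u : Fin 3 → Fin 2) : Fin 3 → ℤ := fun j => ((u j).val : ℤ)

def evens : Finset ((Fin 3 → Fin 2) × (Fin 3 → Fin 2)) :=
  Finset.univ.filter
    (fun c : (Fin 3 → Fin 2) × (Fin 3 → Fin 2) =>
      (∑ j, (c.1 j).val * (c.2 j).val) % 2 = 0)

noncomputable def Lc (R : Matrix (Fin 3) (Fin 3) ℂ)
    (c : (Fin 3 → Fin 2) × (Fin 3 → Fin 2)) : ℂ :=
  ∑ N ∈ Sfun (epsZ c.1), Complex.exp (wterm R (epsZ c.1) (epsZ c.2) N)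

lemma hε01 (u : Fin 3 → Fin 2) : ∀ j, epsZ u j = 0 ∨ epsZ u j = 1 := by
  intro j
  have h := (u j).isLt
  unfold epsZ
  omega

lemma special_sum (R : Matrix (Fin 3) (Fin 3) ℂ) (h21 : R 2 1 = R 1 2) (ε δ : Fin 3 → ℤ)
    (hε0 : ε 0 = 0) (hε1 : ε 1 = 1) (hε2 : ε 2 = 1)
    (hS : Sfun ε = {![0,0,0], ![0,-1,0], ![0,0,-1], ![0,-1,-1]})
    (hδ : δ 2 = δ 1) :
    (∑ N ∈ Sfun ε, Complex.exp (wterm R ε δ N)) =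
      Complex.exp (wterm R ε δ ![0,-1,0]) *
        (Complex.exp (↑Real.pi * I * R 1 2) * Complex.exp (↑Real.pi * I * (δ 1 : ℂ)) + 2 +
          Complex.exp (↑Real.pi * I * R 1 2) / Complex.exp (↑Real.pi * I * (δ 1 : ℂ))) := by
  have e1 : wterm R ε δ ![0,0,0] = wterm R ε δ ![0,-1,0] +
      ↑Real.pi * I * R 1 2 + ↑Real.pi * I * (δ 1 : ℂ) := by
    simp only [wterm, mr, Fin.sum_univ_three, Matrix.cons_val_zero, Matrix.cons_val_one,
      Matrix.head_cons, Matrix.cons_val_two, Matrix.tail_cons, hε0, hε1, hε2]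
    push_cast [hδ]
    linear_combination (↑Real.pi * I / 2) * h21
  have e2 : wterm R ε δ ![0,0,-1] = wterm R ε δ ![0,-1,0] := by
    simp only [wterm, mr, Fin.sum_univ_three, Matrix.cons_val_zero, Matrix.cons_val_one,
      Matrix.head_cons, Matrix.cons_val_two, Matrix.tail_cons, hε0, hε1, hε2]
    push_cast [hδ]
    ring
  have e3 : wterm R ε δ ![0,-1,-1] = wterm R ε δ ![0,-1,0] +
      ↑Real.pi * I * R 1 2 - ↑Real.pi * I * (δ 1 : ℂ) := by
    simp only [wterm, mr, Fin.sum_univ_three, Matrix.cons_val_zero, Matrix.cons_val_one,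
      Matrix.head_cons, Matrix.cons_val_two, Matrix.tail_cons, hε0, hε1, hε2]
    push_cast [hδ]
    linear_combination (↑Real.pi * I / 2) * h21
  rw [hS]
  rw [Finset.sum_insert (by decide), Finset.sum_insert (by decide),
    Finset.sum_insert (by decide), Finset.sum_singleton]
  rw [e1, e2, e3]
  rw [Complex.exp_add, Complex.exp_add, sub_eq_add_neg, Complex.exp_add, Complex.exp_add,
    Complex.exp_neg]
  field_simp
  ring

lemma Dsq (δ1 : ℤ) : Complex.exp (↑Real.pi * I * (δ1 : ℂ)) ^ 2 = 1 := by
  rw [sq, ← Complex.exp_add]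
  have h : (↑Real.pi * I * (δ1 : ℂ)) + (↑Real.pi * I * (δ1 : ℂ)) = (δ1 : ℂ) * (2 * ↑Real.pi * I) := by
    ring
  rw [h, Complex.exp_int_mul_two_pi_mul_I]

lemma special_forward (R : Matrix (Fin 3) (Fin 3) ℂ) (h21 : R 2 1 = R 1 2) (ε δ : Fin 3 → ℤ)
    (hε0 : ε 0 = 0) (hε1 : ε 1 = 1) (hε2 : ε 2 = 1)
    (hS : Sfun ε = {![0,0,0], ![0,-1,0], ![0,0,-1], ![0,-1,-1]})
    (hδ : δ 2 = δ 1)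
    (h : (∑ N ∈ Sfun ε, Complex.exp (wterm R ε δ N)) = 0) :
    Complex.exp (2 * ↑Real.pi * I * R 1 2) = 1 := by
  rw [special_sum R h21 ε δ hε0 hε1 hε2 hS hδ] at h
  set E := Complex.exp (↑Real.pi * I * R 1 2) with hE
  set D := Complex.exp (↑Real.pi * I * (δ 1 : ℂ)) with hD
  have hD2 : D ^ 2 = 1 := Dsq (δ 1)
  have hD0 : D ≠ 0 := Complex.exp_ne_zero _
  have hE0 : E ≠ 0 := Complex.exp_ne_zero _
  rcases mul_eq_zero.mp h with h' | h'
  · exact absurd h' (Complex.exp_ne_zero _)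
  · have h2 : E * D ^ 2 + 2 * D + E = 0 := by
      field_simp at h'
      linear_combination h'
    have h3 : E = -D := by linear_combination (h2 - E * hD2) / 2
    have h4 : (2 * ↑Real.pi * I * R 1 2) = (↑Real.pi * I * R 1 2) + (↑Real.pi * I * R 1 2) := by
      ring
    rw [h4, Complex.exp_add, ← hE, h3]
    linear_combination hD2

lemma special_zero (R : Matrix (Fin 3) (Fin 3) ℂ) (h21 : R 2 1 = R 1 2) (ε δ : Fin 3 → ℤ)
    (hε0 : ε 0 = 0) (hε1 : ε 1 = 1) (hε2 : ε 2 = 1)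
    (hS : Sfun ε = {![0,0,0], ![0,-1,0], ![0,0,-1], ![0,-1,-1]})
    (hδ : δ 2 = δ 1)
    (hval : Complex.exp (↑Real.pi * I * R 1 2) * Complex.exp (↑Real.pi * I * (δ 1 : ℂ)) = -1) :
    (∑ N ∈ Sfun ε, Complex.exp (wterm R ε δ N)) = 0 := by
  rw [special_sum R h21 ε δ hε0 hε1 hε2 hS hδ]
  apply mul_eq_zero_of_right
  set E := Complex.exp (↑Real.pi * I * R 1 2) with hE
  set D := Complex.exp (↑Real.pi * I * (δ 1 : ℂ)) with hD
  have hD2 : D ^ 2 = 1 := Dsq (δ 1)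
  have hD0 : D ≠ 0 := Complex.exp_ne_zero _
  have hdiv : E / D = E * D := by
    rw [div_eq_iff hD0]
    linear_combination -E * hD2
  rw [hdiv]
  linear_combination 2 * hval

lemma sum_mu4 : (∑ c ∈ evens, mu4 (epsZ c.1)) = 80 := by decide

set_option maxHeartbeats 1000000 in
lemma prod_limit (R : Matrix (Fin 3) (Fin 3) ℂ) :
    Filter.Tendsto
      (fun y : ℝ => ((Real.exp (20 * Real.pi * y) : ℝ) : ℂ) *
        thetaNull3 ((I * (y : ℂ)) • EK41 + R))
      Filter.atTop (nhds (∏ c ∈ evens, Lc R c)) := by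
  have key := tendsto_finset_prod (f := fun (c : (Fin 3 → Fin 2) × (Fin 3 → Fin 2)) (y : ℝ) =>
      (↑(Real.exp (Real.pi * (mu4 (epsZ c.1) : ℝ) / 4 * y)) : ℂ) *
        theta 3 (epsZ c.1) (epsZ c.2) ((I * (y : ℂ)) • EK41 + R) 0)
    (a := fun c => Lc R c) evens
    (fun c _ => theta_limit R (epsZ c.1) (epsZ c.2) (hε01 c.1))
  have h80 : (∑ c ∈ evens, (mu4 (epsZ c.1) : ℝ)) = 80 := by
    have := sum_mu4
    exact_mod_cast congrArg (Int.cast : ℤ → ℝ) this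
  have hfun : ∀ y : ℝ,
      ((Real.exp (20 * Real.pi * y) : ℝ) : ℂ) * thetaNull3 ((I * (y : ℂ)) • EK41 + R) =
        ∏ c ∈ evens,
          ((↑(Real.exp (Real.pi * (mu4 (epsZ c.1) : ℝ) / 4 * y)) : ℂ) *
            theta 3 (epsZ c.1) (epsZ c.2) ((I * (y : ℂ)) • EK41 + R) 0) := by
    intro y
    rw [Finset.prod_mul_distrib]
    have hsum : (∑ c ∈ evens, Real.pi * (mu4 (epsZ c.1) : ℝ) / 4 * y) = 20 * Real.pi * y := by
      calc (∑ c ∈ evens, Real.pi * (mu4 (epsZ c.1) : ℝ) / 4 * y)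
          = (Real.pi / 4 * y) * ∑ c ∈ evens, (mu4 (epsZ c.1) : ℝ) := by
            rw [Finset.mul_sum]
            exact Finset.sum_congr rfl fun c _ => by ring
        _ = (Real.pi / 4 * y) * 80 := by rw [h80]
        _ = 20 * Real.pi * y := by ring
    have h1 : (∏ c ∈ evens, (↑(Real.exp (Real.pi * (mu4 (epsZ c.1) : ℝ) / 4 * y)) : ℂ)) =
        ((Real.exp (20 * Real.pi * y) : ℝ) : ℂ) := by
      rw [← Complex.ofReal_prod, ← Real.exp_sum, hsum]
    rw [h1]
    rfl
  have h3 : (fun y : ℝ => ((Real.exp (20 * Real.pi * y) : ℝ) : ℂ) *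
      thetaNull3 ((I * (y : ℂ)) • EK41 + R)) = fun y =>
        ∏ c ∈ evens,
          ((↑(Real.exp (Real.pi * (mu4 (epsZ c.1) : ℝ) / 4 * y)) : ℂ) *
            theta 3 (epsZ c.1) (epsZ c.2) ((I * (y : ℂ)) • EK41 + R) 0) := funext hfun
  rw [h3]
  exact key

end Stmt11

set_option maxHeartbeats 4000000 in
/-- Lowest order behavior of the theta-null along the cone `σ_{K₄−1}`. -/
theorem stmt_11 (R : Matrix (Fin 3) (Fin 3) ℂ) (hR : R.IsSymm) :
    (∀ᶠ y : ℝ in Filter.atTop, SiegelUpper 3 ((I * (y : ℂ)) • EK41 + R)) ∧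
    ∃ L : ℂ,
      Filter.Tendsto
        (fun y : ℝ => (Real.exp (20 * Real.pi * y) : ℂ) *
          thetaNull3 ((I * (y : ℂ)) • EK41 + R))
        Filter.atTop (nhds L) ∧
      (L = 0 ↔ Complex.exp (2 * ↑Real.pi * I * R 1 2) = 1) := by
  have h21 : R 2 1 = R 1 2 := by
    have := congrFun (congrFun hR 1) 2
    simpa [Matrix.transpose_apply] using this
  refine ⟨Stmt11.siegel_event R hR, ∏ c ∈ Stmt11.evens, Stmt11.Lc R c,
    Stmt11.prod_limit R, ?_⟩
  rw [Finset.prod_eq_zero_iff]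
  constructor
  · rintro ⟨⟨u, v⟩, hc, hzero⟩
    obtain ⟨a0, a1, a2, rfl⟩ : ∃ a0 a1 a2, u = ![a0, a1, a2] :=
      ⟨u 0, u 1, u 2, by funext j; fin_cases j <;> rfl⟩
    obtain ⟨b0, b1, b2, rfl⟩ : ∃ b0 b1 b2, v = ![b0, b1, b2] :=
      ⟨v 0, v 1, v 2, by funext j; fin_cases j <;> rfl⟩
    fin_cases a0 <;> fin_cases a1 <;> fin_cases a2 <;>
      fin_cases b0 <;> fin_cases b1 <;> fin_cases b2 <;>
      first
        | exact absurd hc (by decide)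
        | exact absurd hzero (Stmt11.single_case R _ _ (by decide))
        | exact absurd hzero (Stmt11.pair_case R _ _ (by decide) (by decide) 0 (by decide))
        | exact absurd hzero (Stmt11.pair_case R _ _ (by decide) (by decide) 1 (by decide))
        | exact Stmt11.special_forward R h21 _ _ (by decide) (by decide) (by decide)
            (by decide) (by decide) hzero
  · intro hexp
    have hE2 : Complex.exp (↑Real.pi * I * R 1 2) * Complex.exp (↑Real.pi * I * R 1 2) = 1 := by
      rw [← Complex.exp_add,
        show (↑Real.pi * I * R 1 2) + (↑Real.pi * I * R 1 2) = 2 * ↑Real.pi * I * R 1 2 from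
          by ring]
      exact hexp
    rcases mul_self_eq_one_iff.mp hE2 with hE | hE
    · refine ⟨(![0,1,1], ![0,1,1]), by decide, ?_⟩
      apply Stmt11.special_zero R h21 _ _ (by decide) (by decide) (by decide) (by decide)
        (by decide)
      rw [show (Stmt11.epsZ ![0,1,1] 1 : ℤ) = 1 from rfl]
      push_cast
      rw [mul_one, Complex.exp_pi_mul_I, hE]
      norm_num
    · refine ⟨(![0,1,1], ![0,0,0]), by decide, ?_⟩
      apply Stmt11.special_zero R h21 _ _ (by decide) (by decide) (by decide) (by decide)
        (by decide)
      rw [show (Stmt11.epsZ ![0,0,0] 1 : ℤ) = 0 from rfl]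
      push_cast
      rw [mul_zero, Complex.exp_zero, hE, mul_one]
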